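/- Let V be an additive category and let A, B, C, D be cochain complexes over V indexed by ℤ. Suppose given graded maps α_n : A^n → B^n, β_n : B^n → C^n, γ_n : C^n → D^n, ρ_n : A^n → C^{n−1}, σ_n : B^n → D^{n−1}, η_n : A^n → D^{n−2}, and let T be the graded object with T^n = A^n ⊕ B^{n−1} ⊕ C^{n−2} ⊕ D^{n−3}, equipped with the lower-triangular differential whose diagonal entries are d_A, −d_B, d_C, −d_D, whose first subdiagonal entries are α, β, γ, whose second subdiagonal entries are ρ, σ, and whose bottom-left entry is η (each entry placed with the index shifts induced by the grading of T). Assume this differential squares to zero, so that T is a cochain complex. If there exist maps h_n : B^n → C^{n−1} such that β_n = d_C^{n−1} ∘ h_n + h_{n+1} ∘ d_B^n for all n, then T is isomorphic as a cochain complex to the complex T′ with the same underlying graded object and the lower-triangular differential obtained from that of T by replacing β with 0, ρ with ρ + h ∘ α, and σ with σ − γ ∘ h, all other entries unchanged. Moreover, an isomorphism T → T′ is given in each degree by the unipotent matrix that is the identity on each summand and has the single extra off-diagonal entry h from the B-summand to the C-summand. -/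

import Mathlib

open CategoryTheory CategoryTheory.Limits

namespace Combing

variable {V : Type*} [Category V] [Preadditive V] [HasBinaryBiproducts V]

/-- The map between nested binary biproducts `(a ⊞ b) ⊞ (c ⊞ d)` determined by a
`4 × 4` matrix of components. -/
noncomputable def mat4 {a b c d a' b' c' d' : V}
    (f₁₁ : a ⟶ a') (f₁₂ : a ⟶ b') (f₁₃ : a ⟶ c') (f₁₄ : a ⟶ d')
    (f₂₁ : b ⟶ a') (f₂₂ : b ⟶ b') (f₂₃ : b ⟶ c') (f₂₄ : b ⟶ d')
    (f₃₁ : c ⟶ a') (f₃₂ : c ⟶ b') (f₃₃ : c ⟶ c') (f₃₄ : c ⟶ d')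
    (f₄₁ : d ⟶ a') (f₄₂ : d ⟶ b') (f₄₃ : d ⟶ c') (f₄₄ : d ⟶ d') :
    (a ⊞ b) ⊞ (c ⊞ d) ⟶ (a' ⊞ b') ⊞ (c' ⊞ d') :=
  biprod.desc
    (biprod.desc
      (biprod.lift (biprod.lift f₁₁ f₁₂) (biprod.lift f₁₃ f₁₄))
      (biprod.lift (biprod.lift f₂₁ f₂₂) (biprod.lift f₂₃ f₂₄)))
    (biprod.desc
      (biprod.lift (biprod.lift f₃₁ f₃₂) (biprod.lift f₃₃ f₃₄))
      (biprod.lift (biprod.lift f₄₁ f₄₂) (biprod.lift f₄₃ f₄₄)))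

variable (A B C D : CochainComplex V ℤ)

/-- The underlying graded object `T^n = A^n ⊕ B^{n-1} ⊕ C^{n-2} ⊕ D^{n-3}` of the
length-four twisted complex built from `A`, `B`, `C`, `D`. -/
noncomputable def gradedT (n : ℤ) : V := (A.X n ⊞ B.X (n - 1)) ⊞ (C.X (n - 2) ⊞ D.X (n - 3))

/-- The lower-triangular twisted differential on `gradedT`, with diagonal entries
`d_A, −d_B, d_C, −d_D`, first subdiagonal entries `α, β, γ`, second subdiagonal
entries `ρ, σ` and bottom-left entry `η` (each placed with the index shifts induced
by the grading). -/
noncomputable def twDiff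
    (α : ∀ n : ℤ, A.X n ⟶ B.X n) (β : ∀ n : ℤ, B.X n ⟶ C.X n)
    (γ : ∀ n : ℤ, C.X n ⟶ D.X n)
    (ρ : ∀ n : ℤ, A.X n ⟶ C.X (n - 1)) (σ : ∀ n : ℤ, B.X n ⟶ D.X (n - 1))
    (η : ∀ n : ℤ, A.X n ⟶ D.X (n - 2)) (n : ℤ) :
    gradedT A B C D n ⟶ gradedT A B C D (n + 1) :=
  mat4
    (A.d n (n + 1))
    (α n ≫ eqToHom (congrArg B.X (by omega : n = n + 1 - 1)))
    (ρ n ≫ eqToHom (congrArg C.X (by omega : n - 1 = n + 1 - 2)))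
    (η n ≫ eqToHom (congrArg D.X (by omega : n - 2 = n + 1 - 3)))
    0
    (-(B.d (n - 1) (n + 1 - 1)))
    (β (n - 1) ≫ eqToHom (congrArg C.X (by omega : n - 1 = n + 1 - 2)))
    (σ (n - 1) ≫ eqToHom (congrArg D.X (by omega : n - 1 - 1 = n + 1 - 3)))
    0 0
    (C.d (n - 2) (n + 1 - 2))
    (γ (n - 2) ≫ eqToHom (congrArg D.X (by omega : n - 2 = n + 1 - 3)))
    0 0 0
    (-(D.d (n - 3) (n + 1 - 3)))

/-- The unipotent degree-zero endomorphism of `gradedT` which is the identity on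
each summand and has a single extra off-diagonal entry `h` from the `B`-summand to
the `C`-summand. -/
noncomputable def unipotent (h : ∀ n : ℤ, B.X n ⟶ C.X (n - 1)) (n : ℤ) :
    gradedT A B C D n ⟶ gradedT A B C D n :=
  mat4
    (𝟙 _) 0 0 0
    0 (𝟙 _) (h (n - 1) ≫ eqToHom (congrArg C.X (by omega : n - 1 - 1 = n - 2))) 0
    0 0 (𝟙 _) 0
    0 0 0 (𝟙 _)


variable {a b c d a' b' c' d' a'' b'' c'' d'' : V}

lemma mat4_comp
    (f₁₁ : a ⟶ a') (f₁₂ : a ⟶ b') (f₁₃ : a ⟶ c') (f₁₄ : a ⟶ d')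
    (f₂₁ : b ⟶ a') (f₂₂ : b ⟶ b') (f₂₃ : b ⟶ c') (f₂₄ : b ⟶ d')
    (f₃₁ : c ⟶ a') (f₃₂ : c ⟶ b') (f₃₃ : c ⟶ c') (f₃₄ : c ⟶ d')
    (f₄₁ : d ⟶ a') (f₄₂ : d ⟶ b') (f₄₃ : d ⟶ c') (f₄₄ : d ⟶ d')
    (g₁₁ : a' ⟶ a'') (g₁₂ : a' ⟶ b'') (g₁₃ : a' ⟶ c'') (g₁₄ : a' ⟶ d'')
    (g₂₁ : b' ⟶ a'') (g₂₂ : b' ⟶ b'') (g₂₃ : b' ⟶ c'') (g₂₄ : b' ⟶ d'')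
    (g₃₁ : c' ⟶ a'') (g₃₂ : c' ⟶ b'') (g₃₃ : c' ⟶ c'') (g₃₄ : c' ⟶ d'')
    (g₄₁ : d' ⟶ a'') (g₄₂ : d' ⟶ b'') (g₄₃ : d' ⟶ c'') (g₄₄ : d' ⟶ d'') :
    mat4 f₁₁ f₁₂ f₁₃ f₁₄ f₂₁ f₂₂ f₂₃ f₂₄ f₃₁ f₃₂ f₃₃ f₃₄ f₄₁ f₄₂ f₄₃ f₄₄ ≫
      mat4 g₁₁ g₁₂ g₁₃ g₁₄ g₂₁ g₂₂ g₂₃ g₂₄ g₃₁ g₃₂ g₃₃ g₃₄ g₄₁ g₄₂ g₄₃ g₄₄ =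
    mat4
      (f₁₁ ≫ g₁₁ + f₁₂ ≫ g₂₁ + f₁₃ ≫ g₃₁ + f₁₄ ≫ g₄₁)
      (f₁₁ ≫ g₁₂ + f₁₂ ≫ g₂₂ + f₁₃ ≫ g₃₂ + f₁₄ ≫ g₄₂)
      (f₁₁ ≫ g₁₃ + f₁₂ ≫ g₂₃ + f₁₃ ≫ g₃₃ + f₁₄ ≫ g₄₃)
      (f₁₁ ≫ g₁₄ + f₁₂ ≫ g₂₄ + f₁₃ ≫ g₃₄ + f₁₄ ≫ g₄₄)
      (f₂₁ ≫ g₁₁ + f₂₂ ≫ g₂₁ + f₂₃ ≫ g₃₁ + f₂₄ ≫ g₄₁)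
      (f₂₁ ≫ g₁₂ + f₂₂ ≫ g₂₂ + f₂₃ ≫ g₃₂ + f₂₄ ≫ g₄₂)
      (f₂₁ ≫ g₁₃ + f₂₂ ≫ g₂₃ + f₂₃ ≫ g₃₃ + f₂₄ ≫ g₄₃)
      (f₂₁ ≫ g₁₄ + f₂₂ ≫ g₂₄ + f₂₃ ≫ g₃₄ + f₂₄ ≫ g₄₄)
      (f₃₁ ≫ g₁₁ + f₃₂ ≫ g₂₁ + f₃₃ ≫ g₃₁ + f₃₄ ≫ g₄₁)
      (f₃₁ ≫ g₁₂ + f₃₂ ≫ g₂₂ + f₃₃ ≫ g₃₂ + f₃₄ ≫ g₄₂)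
      (f₃₁ ≫ g₁₃ + f₃₂ ≫ g₂₃ + f₃₃ ≫ g₃₃ + f₃₄ ≫ g₄₃)
      (f₃₁ ≫ g₁₄ + f₃₂ ≫ g₂₄ + f₃₃ ≫ g₃₄ + f₃₄ ≫ g₄₄)
      (f₄₁ ≫ g₁₁ + f₄₂ ≫ g₂₁ + f₄₃ ≫ g₃₁ + f₄₄ ≫ g₄₁)
      (f₄₁ ≫ g₁₂ + f₄₂ ≫ g₂₂ + f₄₃ ≫ g₃₂ + f₄₄ ≫ g₄₂)
      (f₄₁ ≫ g₁₃ + f₄₂ ≫ g₂₃ + f₄₃ ≫ g₃₃ + f₄₄ ≫ g₄₃)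
      (f₄₁ ≫ g₁₄ + f₄₂ ≫ g₂₄ + f₄₃ ≫ g₃₄ + f₄₄ ≫ g₄₄) := by
  ext <;> simp [mat4] <;> abel

lemma mat4_id : mat4 (𝟙 a) 0 0 0 0 (𝟙 b) 0 0 0 0 (𝟙 c) 0 0 0 0 (𝟙 d) = 𝟙 ((a ⊞ b) ⊞ (c ⊞ d)) := by
  ext <;> simp [mat4]

lemma mat4_congr
    (f₁₁ g₁₁ : a ⟶ a') (f₁₂ g₁₂ : a ⟶ b') (f₁₃ g₁₃ : a ⟶ c') (f₁₄ g₁₄ : a ⟶ d')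
    (f₂₁ g₂₁ : b ⟶ a') (f₂₂ g₂₂ : b ⟶ b') (f₂₃ g₂₃ : b ⟶ c') (f₂₄ g₂₄ : b ⟶ d')
    (f₃₁ g₃₁ : c ⟶ a') (f₃₂ g₃₂ : c ⟶ b') (f₃₃ g₃₃ : c ⟶ c') (f₃₄ g₃₄ : c ⟶ d')
    (f₄₁ g₄₁ : d ⟶ a') (f₄₂ g₄₂ : d ⟶ b') (f₄₃ g₄₃ : d ⟶ c') (f₄₄ g₄₄ : d ⟶ d')
    (h₁₁ : f₁₁ = g₁₁) (h₁₂ : f₁₂ = g₁₂) (h₁₃ : f₁₃ = g₁₃) (h₁₄ : f₁₄ = g₁₄)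
    (h₂₁ : f₂₁ = g₂₁) (h₂₂ : f₂₂ = g₂₂) (h₂₃ : f₂₃ = g₂₃) (h₂₄ : f₂₄ = g₂₄)
    (h₃₁ : f₃₁ = g₃₁) (h₃₂ : f₃₂ = g₃₂) (h₃₃ : f₃₃ = g₃₃) (h₃₄ : f₃₄ = g₃₄)
    (h₄₁ : f₄₁ = g₄₁) (h₄₂ : f₄₂ = g₄₂) (h₄₃ : f₄₃ = g₄₃) (h₄₄ : f₄₄ = g₄₄) :
    mat4 f₁₁ f₁₂ f₁₃ f₁₄ f₂₁ f₂₂ f₂₃ f₂₄ f₃₁ f₃₂ f₃₃ f₃₄ f₄₁ f₄₂ f₄₃ f₄₄ =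
    mat4 g₁₁ g₁₂ g₁₃ g₁₄ g₂₁ g₂₂ g₂₃ g₂₄ g₃₁ g₃₂ g₃₃ g₃₄ g₄₁ g₄₂ g₄₃ g₄₄ := by
  subst h₁₁ h₁₂ h₁₃ h₁₄ h₂₁ h₂₂ h₂₃ h₂₄ h₃₁ h₃₂ h₃₃ h₃₄ h₄₁ h₄₂ h₄₃ h₄₄; rfl



set_option linter.unusedSectionVars false

lemma eqToHom_d (X : CochainComplex V ℤ) {i i' j : ℤ} (e : i = i') :
    eqToHom (congrArg X.X e) ≫ X.d i' j = X.d i j := by subst e; simp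

lemma d_eqToHom (X : CochainComplex V ℤ) {i j j' : ℤ} (e : j = j') :
    X.d i j ≫ eqToHom (congrArg X.X e) = X.d i j' := by subst e; simp

lemma d_eqToHom_assoc (X : CochainComplex V ℤ) {i j j' : ℤ} (e : j = j') {Z : V}
    (g : X.X j' ⟶ Z) : X.d i j ≫ eqToHom (congrArg X.X e) ≫ g = X.d i j' ≫ g := by
  subst e; simp

lemma h_cast (h : ∀ n : ℤ, B.X n ⟶ C.X (n - 1)) {m m' : ℤ} (e : m = m') :
    h m = eqToHom (congrArg B.X e) ≫ h m' ≫
      eqToHom (congrArg C.X (by omega : m' - 1 = m - 1)) := by subst e; simp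

lemma γ_cast (γ : ∀ n : ℤ, C.X n ⟶ D.X n) {m m' : ℤ} (e : m = m') :
    γ m = eqToHom (congrArg C.X e) ≫ γ m' ≫
      eqToHom (congrArg D.X e.symm) := by subst e; simp

lemma key_comm
    (α : ∀ n : ℤ, A.X n ⟶ B.X n) (β : ∀ n : ℤ, B.X n ⟶ C.X n)
    (γ : ∀ n : ℤ, C.X n ⟶ D.X n)
    (ρ : ∀ n : ℤ, A.X n ⟶ C.X (n - 1)) (σ : ∀ n : ℤ, B.X n ⟶ D.X (n - 1))
    (η : ∀ n : ℤ, A.X n ⟶ D.X (n - 2))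
    (h : ∀ n : ℤ, B.X n ⟶ C.X (n - 1))
    (hβ : ∀ n : ℤ, β n = h n ≫ C.d (n - 1) n +
      B.d n (n + 1) ≫ h (n + 1) ≫ eqToHom (congrArg C.X (add_sub_cancel_right n 1)))
    (n : ℤ) :
    unipotent A B C D h n ≫ twDiff A B C D α (fun _ => 0) γ
        (fun n => ρ n + α n ≫ h n) (fun n => σ n - h n ≫ γ (n - 1)) η n =
    twDiff A B C D α β γ ρ σ η n ≫ unipotent A B C D h (n + 1) := by
  rw [unipotent, unipotent, twDiff, twDiff]
  erw [mat4_comp, mat4_comp]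
  apply mat4_congr <;>
    simp only [eqToHom_refl, Category.comp_id, Category.id_comp, comp_zero, zero_comp,
      add_zero, zero_add, sub_zero, neg_zero, Preadditive.comp_add, Preadditive.add_comp,
      Preadditive.comp_sub, Preadditive.sub_comp, Preadditive.comp_neg,
      Preadditive.neg_comp, Category.assoc, eqToHom_trans, eqToHom_d, d_eqToHom] <;>
    try rfl
  case h₁₃ =>
    rw [h_cast B C h (show n + 1 - 1 = n by omega)]
    simp only [eqToHom_trans, eqToHom_trans_assoc, eqToHom_refl, Category.id_comp,
      Category.assoc]
    abel
  case h₂₃ =>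
    rw [hβ (n - 1), h_cast B C h (show n + 1 - 1 = n by omega),
      h_cast B C h (show n - 1 + 1 = n by omega)]
    simp only [eqToHom_trans, eqToHom_trans_assoc, eqToHom_refl, Category.id_comp,
      Category.comp_id, Category.assoc, Preadditive.add_comp, Preadditive.comp_add,
      eqToHom_d, d_eqToHom]
    rw [eqToHom_d C (show n - 1 - 1 = n - 2 by omega),
      d_eqToHom C (show n - 1 = n + 1 - 2 by omega),
      d_eqToHom_assoc B (show n + 1 - 1 = n by omega),
      d_eqToHom_assoc B (show n - 1 + 1 = n by omega)]
    abel
  case h₂₄ =>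
    rw [γ_cast C D γ (show n - 2 = n - 1 - 1 by omega)]
    simp only [eqToHom_trans, eqToHom_trans_assoc, eqToHom_refl, Category.id_comp,
      Category.assoc]
    abel


/-- Inverse of `unipotent`. -/
noncomputable def unipotentInv (h : ∀ n : ℤ, B.X n ⟶ C.X (n - 1)) (n : ℤ) :
    gradedT A B C D n ⟶ gradedT A B C D n :=
  mat4
    (𝟙 _) 0 0 0
    0 (𝟙 _) (-(h (n - 1) ≫ eqToHom (congrArg C.X (by omega : n - 1 - 1 = n - 2)))) 0
    0 0 (𝟙 _) 0
    0 0 0 (𝟙 _)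

lemma unipotent_comp_inv (h : ∀ n : ℤ, B.X n ⟶ C.X (n - 1)) (n : ℤ) :
    unipotent A B C D h n ≫ unipotentInv A B C D h n = 𝟙 _ := by
  rw [unipotent, unipotentInv]
  erw [mat4_comp]
  rw [show 𝟙 (gradedT A B C D n) = mat4 (𝟙 (A.X n)) 0 0 0 0 (𝟙 (B.X (n - 1))) 0 0 0 0
      (𝟙 (C.X (n - 2))) 0 0 0 0 (𝟙 (D.X (n - 3))) from mat4_id.symm]
  apply mat4_congr <;> simp

lemma inv_comp_unipotent (h : ∀ n : ℤ, B.X n ⟶ C.X (n - 1)) (n : ℤ) :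
    unipotentInv A B C D h n ≫ unipotent A B C D h n = 𝟙 _ := by
  rw [unipotent, unipotentInv]
  erw [mat4_comp]
  rw [show 𝟙 (gradedT A B C D n) = mat4 (𝟙 (A.X n)) 0 0 0 0 (𝟙 (B.X (n - 1))) 0 0 0 0
      (𝟙 (C.X (n - 2))) 0 0 0 0 (𝟙 (D.X (n - 3))) from mat4_id.symm]
  apply mat4_congr <;> simp


end Combing

open Combing in
/-- The Combing Lemma for a length-four twisted complex of cochain complexes: if the
component `β` of the twisted differential is a boundary in the `Hom`-complex, i.e.
`β_n = d_C ∘ h_n + h_{n+1} ∘ d_B` for some degree `−1` maps `h_n : B^n → C^{n−1}`,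
then the twisted complex `T` is isomorphic as a cochain complex to the twisted
complex `T'` obtained by replacing `β` with `0`, `ρ` with `ρ + h ∘ α` and `σ` with
`σ − γ ∘ h`; moreover an isomorphism `T ≅ T'` is given in each degree by the
unipotent matrix with the single extra entry `h` from the `B`-summand to the
`C`-summand. -/
theorem combing_lemma {V : Type*} [Category V] [Preadditive V] [HasBinaryBiproducts V]
    (A B C D : CochainComplex V ℤ)
    (α : ∀ n : ℤ, A.X n ⟶ B.X n) (β : ∀ n : ℤ, B.X n ⟶ C.X n)
    (γ : ∀ n : ℤ, C.X n ⟶ D.X n)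
    (ρ : ∀ n : ℤ, A.X n ⟶ C.X (n - 1)) (σ : ∀ n : ℤ, B.X n ⟶ D.X (n - 1))
    (η : ∀ n : ℤ, A.X n ⟶ D.X (n - 2))
    (hsq : ∀ n : ℤ, twDiff A B C D α β γ ρ σ η n ≫
      twDiff A B C D α β γ ρ σ η (n + 1) = 0)
    (h : ∀ n : ℤ, B.X n ⟶ C.X (n - 1))
    (hβ : ∀ n : ℤ, β n = h n ≫ C.d (n - 1) n +
      B.d n (n + 1) ≫ h (n + 1) ≫ eqToHom (congrArg C.X (by omega : n + 1 - 1 = n))) :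
    ∃ hsq' : ∀ n : ℤ, twDiff A B C D α (fun _ => 0) γ
        (fun n => ρ n + α n ≫ h n) (fun n => σ n - h n ≫ γ (n - 1)) η n ≫
        twDiff A B C D α (fun _ => 0) γ
        (fun n => ρ n + α n ≫ h n) (fun n => σ n - h n ≫ γ (n - 1)) η (n + 1) = 0,
      ∃ e : CochainComplex.of (gradedT A B C D)
            (twDiff A B C D α β γ ρ σ η) hsq ≅
          CochainComplex.of (gradedT A B C D)
            (twDiff A B C D α (fun _ => 0) γ
              (fun n => ρ n + α n ≫ h n) (fun n => σ n - h n ≫ γ (n - 1)) η) hsq',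
        ∀ n : ℤ, e.hom.f n = unipotent A B C D h n := by
  have key := key_comm A B C D α β γ ρ σ η h hβ
  have hd' : ∀ n : ℤ, twDiff A B C D α (fun _ => 0) γ
      (fun n => ρ n + α n ≫ h n) (fun n => σ n - h n ≫ γ (n - 1)) η n =
      unipotentInv A B C D h n ≫ twDiff A B C D α β γ ρ σ η n ≫
        unipotent A B C D h (n + 1) := by
    intro n
    rw [← key n, ← Category.assoc, inv_comp_unipotent, Category.id_comp]
  have hsq' : ∀ n : ℤ, twDiff A B C D α (fun _ => 0) γ
      (fun n => ρ n + α n ≫ h n) (fun n => σ n - h n ≫ γ (n - 1)) η n ≫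
      twDiff A B C D α (fun _ => 0) γ
      (fun n => ρ n + α n ≫ h n) (fun n => σ n - h n ≫ γ (n - 1)) η (n + 1) = 0 := by
    intro n
    rw [hd' n, hd' (n + 1)]
    simp only [Category.assoc]
    rw [← Category.assoc (unipotent A B C D h (n + 1)), unipotent_comp_inv,
      Category.id_comp]
    slice_lhs 2 3 => rw [hsq n]
    simp
  refine ⟨hsq', ?_⟩
  refine ⟨HomologicalComplex.Hom.isoOfComponents
    (fun n => ⟨unipotent A B C D h n, unipotentInv A B C D h n,
      unipotent_comp_inv A B C D h n, inv_comp_unipotent A B C D h n⟩) ?_, fun n => rfl⟩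
  rintro i j (rfl : i + 1 = j)
  simp only [CochainComplex.of_d]
  exact key i
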